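/- arXiv:1812.03302 — 7 statements merged into one kernel-verified Lean document; each statement's English description precedes it below -/
import Mathlib

section
/- The heterogeneous networked system is controllable (i.e., the pair (Φ, Ψ) is controllable) if and only if for every complex number s, the only row vectors α_1, …, α_N ∈ ℂ^{1×n} satisfying α_i (s·I_n − A_i) − (Σ_{j=1, j≠i}^{N} ω_{ji} α_j)·H·C_i = 0 and δ_i·α_i·B_i = 0 for all i = 1, …, N are α_1 = α_2 = … = α_N = 0. -/
open Matrix Finset

/-- PBH test: the pair `(M, B)` is controllable iff `[s·I − M, B]` has full row rank
for every `s ∈ ℂ`. -/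
def IsControllable {q r : Type*} [Fintype q] [Fintype r] [DecidableEq q]
    (M : Matrix q q ℂ) (B : Matrix q r ℂ) : Prop :=
  ∀ s : ℂ, (Matrix.fromCols (s • (1 : Matrix q q ℂ) - M) B).rank = Fintype.card q


lemma rank_eq_card_iff_vecMul {q r : Type*} [Fintype q] [Fintype r] (M : Matrix q r ℂ) :
    M.rank = Fintype.card q ↔ ∀ v : q → ℂ, v ᵥ* M = 0 → v = 0 := by
  rw [M.rank_eq_finrank_span_row, ← Set.finrank, eq_comm,
    ← linearIndependent_iff_card_eq_finrank_span, Fintype.linearIndependent_iff]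
  constructor
  · intro h v hv
    funext i
    refine h v ?_ i
    rw [← hv]
    ext j
    simp [vecMul, dotProduct, Finset.sum_apply, Pi.smul_apply]
  · intro h g hg
    have : g = 0 := by
      apply h
      ext j
      rw [← congrFun hg j]
      simp [vecMul, dotProduct, Finset.sum_apply, Pi.smul_apply]
    intro i; rw [this]; rfl


/-- Theorem 1: the heterogeneous networked system `(Φ, Ψ)` is controllable
iff for every `s ∈ ℂ` the only row vectors `α₁, …, α_N ∈ ℂ^{1×n}` with
`αᵢ(s·I − Aᵢ) − (∑_{j≠i} ω_{ji} αⱼ)·H·Cᵢ = 0` and `δᵢ·αᵢ·Bᵢ = 0` for all `i`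
are `αᵢ = 0` for all `i`. -/
theorem stmt0 (N n m p : ℕ) (hN : 1 ≤ N)
    (A : Fin N → Matrix (Fin n) (Fin n) ℝ)
    (B : Fin N → Matrix (Fin n) (Fin p) ℝ)
    (C : Fin N → Matrix (Fin m) (Fin n) ℝ)
    (H : Matrix (Fin n) (Fin m) ℝ)
    (W : Matrix (Fin N) (Fin N) ℝ) (hW : ∀ i, W i i = 0)
    (δ : Fin N → ℝ) (hδ : ∀ i, δ i = 0 ∨ δ i = 1)
    -- the N×N block matrix Φ : (i,i)-block is Aᵢ, (i,j)-block (i≠j) is ω_{ij}·H·C_j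
    (Φ : Matrix (Fin N × Fin n) (Fin N × Fin n) ℂ)
    (hΦ : ∀ x y : Fin N × Fin n, Φ x y =
      if x.1 = y.1 then ((A x.1 x.2 y.2 : ℝ) : ℂ)
      else ((W x.1 y.1 : ℝ) : ℂ) *
        ((H.map Complex.ofReal) * (C y.1).map Complex.ofReal) x.2 y.2)
    -- Ψ = blockdiag(δ₁·B₁, …, δ_N·B_N)
    (Ψ : Matrix (Fin N × Fin n) (Fin N × Fin p) ℂ)
    (hΨ : ∀ (x : Fin N × Fin n) (y : Fin N × Fin p), Ψ x y =
      if x.1 = y.1 then ((δ x.1 : ℝ) : ℂ) * ((B x.1 x.2 y.2 : ℝ) : ℂ) else 0) :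
    IsControllable Φ Ψ ↔
      ∀ (s : ℂ) (α : Fin N → (Fin n → ℂ)),
        (∀ i : Fin N,
            α i ᵥ* (s • (1 : Matrix (Fin n) (Fin n) ℂ) - (A i).map Complex.ofReal)
              - (∑ j ∈ Finset.univ.erase i, ((W j i : ℝ) : ℂ) • α j) ᵥ*
                  ((H.map Complex.ofReal) * (C i).map Complex.ofReal) = 0
          ∧ ((δ i : ℝ) : ℂ) • (α i ᵥ* (B i).map Complex.ofReal) = 0) →
        ∀ i, α i = 0 := by
  unfold IsControllable
  have key : ∀ (s : ℂ) (v : Fin N × Fin n → ℂ),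
      (v ᵥ* Matrix.fromCols (s • (1 : Matrix (Fin N × Fin n) (Fin N × Fin n) ℂ) - Φ) Ψ = 0) ↔
      (∀ i : Fin N,
          (fun x => v (i, x)) ᵥ* (s • (1 : Matrix (Fin n) (Fin n) ℂ) - (A i).map Complex.ofReal)
            - (∑ j ∈ Finset.univ.erase i, ((W j i : ℝ) : ℂ) • (fun x => v (j, x))) ᵥ*
                ((H.map Complex.ofReal) * (C i).map Complex.ofReal) = 0
        ∧ ((δ i : ℝ) : ℂ) • ((fun x => v (i, x)) ᵥ* (B i).map Complex.ofReal) = 0) := by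
    intro s v
    have hA : ∀ (i : Fin N) (y : Fin n),
        (v ᵥ* (s • (1 : Matrix (Fin N × Fin n) (Fin N × Fin n) ℂ) - Φ)) (i, y) =
        ((fun x => v (i, x)) ᵥ* (s • (1 : Matrix (Fin n) (Fin n) ℂ) - (A i).map Complex.ofReal)
          - (∑ j ∈ Finset.univ.erase i, ((W j i : ℝ) : ℂ) • (fun x => v (j, x))) ᵥ*
              ((H.map Complex.ofReal) * (C i).map Complex.ofReal)) y := by
      intro i y
      simp only [vecMul, dotProduct, Pi.sub_apply, Matrix.sub_apply, Matrix.smul_apply, one_apply, hΦ,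
        smul_eq_mul, Fintype.sum_prod_type, Finset.sum_apply, Pi.smul_apply]
      rw [← Finset.sum_erase_add _ _ (Finset.mem_univ i)]
      have h1 : ∀ j ∈ Finset.univ.erase i, ∑ x : Fin n,
          v (j, x) * ((s * if (j, x) = (i, y) then 1 else 0) -
            if j = i then ((A j x y : ℝ) : ℂ)
            else ((W j i : ℝ) : ℂ) * ((H.map Complex.ofReal) * (C i).map Complex.ofReal) x y) =
          -∑ x : Fin n, ((W j i : ℝ) : ℂ) * v (j, x) *
            ((H.map Complex.ofReal) * (C i).map Complex.ofReal) x y := by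
        intro j hj
        have hji : j ≠ i := (Finset.mem_erase.mp hj).1
        rw [← Finset.sum_neg_distrib]
        refine Finset.sum_congr rfl fun x _ => ?_
        have : (j, x) ≠ (i, y) := fun h => hji (congrArg Prod.fst h)
        rw [if_neg this, if_neg hji]
        ring
      rw [Finset.sum_congr rfl h1]
      have h2 : ∑ x : Fin n, v (i, x) * ((s * if (i, x) = (i, y) then 1 else 0) -
            if i = i then ((A i x y : ℝ) : ℂ)
            else ((W i i : ℝ) : ℂ) * ((H.map Complex.ofReal) * (C i).map Complex.ofReal) x y) =
          ∑ x : Fin n, v (i, x) * ((s * if x = y then 1 else 0) - ((A i x y : ℝ) : ℂ)) := by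
        refine Finset.sum_congr rfl fun x _ => ?_
        simp [Prod.ext_iff]
      rw [h2, sub_eq_add_neg, add_comm]
      congr 1
      rw [Finset.sum_neg_distrib, neg_inj, Finset.sum_comm]
      refine Finset.sum_congr rfl fun x _ => ?_
      rw [Finset.sum_mul]
    have hB : ∀ (i : Fin N) (y : Fin p),
        (v ᵥ* Ψ) (i, y) =
        (((δ i : ℝ) : ℂ) • ((fun x => v (i, x)) ᵥ* (B i).map Complex.ofReal)) y := by
      intro i y
      simp only [vecMul, dotProduct, hΨ, Fintype.sum_prod_type, Pi.smul_apply, smul_eq_mul,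
        map_apply]
      rw [← Finset.sum_erase_add _ _ (Finset.mem_univ i),
        Finset.sum_eq_zero (fun j hj => Finset.sum_eq_zero fun x _ => by
          rw [if_neg (Finset.mem_erase.mp hj).1, mul_zero]), zero_add, Finset.mul_sum]
      refine Finset.sum_congr rfl fun x _ => ?_
      rw [if_pos rfl]; ring
    rw [vecMul_fromCols]
    constructor
    · intro h i
      constructor
      · funext y
        have h' := congrFun h (Sum.inl (i, y))
        simp only [Sum.elim_inl, Pi.zero_apply] at h'
        rw [hA i y] at h'
        exact h'
      · funext y
        have h' := congrFun h (Sum.inr (i, y))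
        simp only [Sum.elim_inr, Pi.zero_apply] at h'
        rw [hB i y] at h'
        exact h'
    · intro h
      funext z
      rcases z with (⟨i, y⟩ | ⟨i, y⟩)
      · show (v ᵥ* _) (i, y) = (0 : ℂ)
        rw [hA i y]
        exact congrFun (h i).1 y
      · show (v ᵥ* Ψ) (i, y) = (0 : ℂ)
        rw [hB i y]
        exact congrFun (h i).2 y
  constructor
  · intro hc s α hα
    have h0 := (rank_eq_card_iff_vecMul _).mp (hc s) (fun z => α z.1 z.2)
    have : (fun z : Fin N × Fin n => α z.1 z.2) = 0 := by
      apply h0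
      rw [key]
      intro i
      exact hα i
    intro i
    funext x
    exact congrFun this (i, x)
  · intro hr s
    rw [rank_eq_card_iff_vecMul]
    intro v hv
    have := hr s (fun i x => v (i, x)) ((key s v).mp hv)
    funext z
    exact congrFun (this z.1) z.2
end

section
/- In the directed chain network, if δ_1 = 1 and δ_2 = δ_3 = … = δ_N = 0 (only the root node is under external control), then the networked system is controllable, i.e., for every s ∈ ℂ the matrix [s·I_{Nn} − Φ, Ψ] has rank Nn. -/
open Matrix Finset

/-- Corollary 1, sufficiency: in the directed chain network rooted at
node 1 (index 0), with superdiagonal node matrices `Aᵢ`, products `H·Cᵢ` whose only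
nonzero entry is the bottom-left one, and `Bᵢ = eₙ`, if only the root node is under
external control (`δ₁ = 1`, `δᵢ = 0` otherwise), then the networked system is
controllable: for every `s ∈ ℂ`, `[s·I_{Nn} − Φ, Ψ]` has rank `N·n`. -/
theorem stmt1 (N n : ℕ) (hN : 0 < N) (hn : 0 < n)
    (A : Fin N → Matrix (Fin n) (Fin n) ℝ)
    (B : Fin N → Matrix (Fin n) (Fin 1) ℝ)
    (C : Fin N → Matrix (Fin 1) (Fin n) ℝ)
    (H : Matrix (Fin n) (Fin 1) ℝ)
    (W : Matrix (Fin N) (Fin N) ℝ)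
    (δ : Fin N → ℝ)
    -- each Aᵢ is superdiagonal with nonzero superdiagonal entries a_{i,k}
    (hA0 : ∀ (i : Fin N) (k l : Fin n), (l : ℕ) ≠ (k : ℕ) + 1 → A i k l = 0)
    (hA1 : ∀ (i : Fin N) (k l : Fin n), (l : ℕ) = (k : ℕ) + 1 → A i k l ≠ 0)
    -- each H·Cᵢ has its only nonzero entry h_{i,1} ≠ 0 at the bottom-left position
    (hHC0 : ∀ (i : Fin N) (k l : Fin n), ¬((k : ℕ) = n - 1 ∧ (l : ℕ) = 0) →
      (H * C i) k l = 0)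
    (hHC1 : ∀ (i : Fin N) (k l : Fin n), (k : ℕ) = n - 1 → (l : ℕ) = 0 →
      (H * C i) k l ≠ 0)
    -- Bᵢ = eₙ, the n-th standard basis column vector
    (hB : ∀ (i : Fin N) (k : Fin n) (l : Fin 1),
      B i k l = if (k : ℕ) = n - 1 then 1 else 0)
    -- chain topology rooted at node 1: ω_{i+1,i} ≠ 0, all other entries zero
    (hW0 : ∀ i j : Fin N, (i : ℕ) ≠ (j : ℕ) + 1 → W i j = 0)
    (hW1 : ∀ (j : Fin N) (h : (j : ℕ) + 1 < N), W ⟨(j : ℕ) + 1, h⟩ j ≠ 0)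
    -- only the root node is under external control
    (hδ1 : δ ⟨0, hN⟩ = 1)
    (hδ0 : ∀ i : Fin N, (i : ℕ) ≠ 0 → δ i = 0)
    -- the N×N block matrix Φ and the block diagonal input matrix Ψ
    (Φ : Matrix (Fin N × Fin n) (Fin N × Fin n) ℂ)
    (hΦ : ∀ x y : Fin N × Fin n, Φ x y =
      if x.1 = y.1 then ((A x.1 x.2 y.2 : ℝ) : ℂ)
      else ((W x.1 y.1 : ℝ) : ℂ) *
        ((H.map Complex.ofReal) * (C y.1).map Complex.ofReal) x.2 y.2)
    (Ψ : Matrix (Fin N × Fin n) (Fin N × Fin 1) ℂ)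
    (hΨ : ∀ (x : Fin N × Fin n) (y : Fin N × Fin 1), Ψ x y =
      if x.1 = y.1 then ((δ x.1 : ℝ) : ℂ) * ((B x.1 x.2 y.2 : ℝ) : ℂ) else 0) :
    ∀ s : ℂ,
      (Matrix.fromCols (s • (1 : Matrix (Fin N × Fin n) (Fin N × Fin n) ℂ) - Φ) Ψ).rank
        = N * n := by
  intro s
  have hn1 : n - 1 < n := by omega
  set P : Matrix (Fin N × Fin n) (Fin N × Fin n) ℂ :=
    s • (1 : Matrix (Fin N × Fin n) (Fin N × Fin n) ℂ) - Φ with hP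
  have hmul : ∀ (j : Fin N) (k l : Fin n),
      ((H.map Complex.ofReal) * ((C j).map Complex.ofReal)) k l
        = (((H * C j) k l : ℝ) : ℂ) := by
    intro j k l
    simp [Matrix.mul_apply, Matrix.map_apply]
  have hΦ' : ∀ (i j : Fin N) (k l : Fin n), Φ (i, k) (j, l) =
      if i = j then ((A i k l : ℝ) : ℂ)
      else ((W i j : ℝ) : ℂ) * (((H * C j) k l : ℝ) : ℂ) := by
    intro i j k l
    rw [hΦ, hmul]
  set M := Matrix.fromCols P Ψ with hM
  have key : ∀ v : (Fin N × Fin n) → ℂ, v ᵥ* M = 0 → v = 0 := by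
    intro v hv
    have hv' : ∀ x, ∑ y, M y x * v y = 0 := by
      intro x
      have := congrFun hv x
      simpa [Matrix.vecMul, dotProduct, mul_comm] using this
    -- column equations for the P-part
    have col : ∀ (j : Fin N) (l : Fin n),
        s * v (j, l) = ∑ y : Fin N × Fin n, Φ y (j, l) * v y := by
      intro j l
      have h := hv' (Sum.inl (j, l))
      have h2 : ∑ y : Fin N × Fin n,
          (s * (if y = (j, l) then 1 else 0) - Φ y (j, l)) * v y = 0 := by
        simpa [hM, hP, Matrix.sub_apply, Matrix.smul_apply, Matrix.one_apply,
          smul_eq_mul] using h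
      have h3 : (∑ y : Fin N × Fin n, (s * (if y = (j, l) then 1 else 0)) * v y)
          - (∑ y : Fin N × Fin n, Φ y (j, l) * v y) = 0 := by
        rw [← Finset.sum_sub_distrib]
        simpa [sub_mul] using h2
      have h4 : (∑ y : Fin N × Fin n, (s * (if y = (j, l) then 1 else 0)) * v y)
          = s * v (j, l) := by
        simp [ite_mul, mul_ite, Finset.sum_ite_eq]
      rw [h4] at h3
      exact sub_eq_zero.mp h3
    -- sum formula when l ≥ 1
    have sumA : ∀ (j : Fin N) (k l : Fin n), (l : ℕ) = (k : ℕ) + 1 →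
        ∑ y : Fin N × Fin n, Φ y (j, l) * v y
          = ((A j k l : ℝ) : ℂ) * v (j, k) := by
      intro j k l hkl
      have h0 : ∀ b ∈ (Finset.univ : Finset (Fin N × Fin n)),
          b ≠ (j, k) → Φ b (j, l) * v b = 0 := by
        rintro ⟨i, k₂⟩ - hne
        rw [hΦ']
        by_cases hij : i = j
        · subst hij
          rw [if_pos rfl]
          have hk : (l : ℕ) ≠ (k₂ : ℕ) + 1 := by
            intro hkl2
            exact hne (by rw [show k₂ = k from Fin.ext (by omega)])
          rw [hA0 i k₂ l hk]
          simp
        · rw [if_neg hij]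
          by_cases hWij : (i : ℕ) = (j : ℕ) + 1
          · rw [hHC0 j k₂ l (by omega)]
            simp
          · rw [hW0 i j hWij]
            simp
      rw [Finset.sum_eq_single_of_mem (j, k) (Finset.mem_univ _) h0, hΦ',
        if_pos rfl]
    -- sum formula when l = 0 and j is not the last node
    have sumB : ∀ (j : Fin N) (hj : (j : ℕ) + 1 < N) (l : Fin n), (l : ℕ) = 0 →
        ∑ y : Fin N × Fin n, Φ y (j, l) * v y
          = ((W ⟨(j : ℕ) + 1, hj⟩ j : ℝ) : ℂ)
            * (((H * C j) ⟨n - 1, hn1⟩ l : ℝ) : ℂ)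
            * v (⟨(j : ℕ) + 1, hj⟩, ⟨n - 1, hn1⟩) := by
      intro j hj l hl
      have h0 : ∀ b ∈ (Finset.univ : Finset (Fin N × Fin n)),
          b ≠ ((⟨(j : ℕ) + 1, hj⟩ : Fin N), (⟨n - 1, hn1⟩ : Fin n)) →
            Φ b (j, l) * v b = 0 := by
        rintro ⟨i, k₂⟩ - hne
        rw [hΦ']
        by_cases hij : i = j
        · subst hij
          rw [if_pos rfl, hA0 i k₂ l (by omega)]
          simp
        · rw [if_neg hij]
          by_cases hWij : (i : ℕ) = (j : ℕ) + 1
          · have hik : k₂ ≠ (⟨n - 1, hn1⟩ : Fin n) := by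
              intro hk
              exact hne (by rw [hk, show i = (⟨(j : ℕ) + 1, hj⟩ : Fin N) from
                Fin.ext (by simpa using hWij)])
            have hk2 : (k₂ : ℕ) ≠ n - 1 := fun hc => hik (Fin.ext (by simpa using hc))
            rw [hHC0 j k₂ l (by omega)]
            simp
          · rw [hW0 i j hWij]
            simp
      rw [Finset.sum_eq_single_of_mem _ (Finset.mem_univ _) h0, hΦ',
        if_neg (by
          intro hc
          have h' : (j : ℕ) + 1 = (j : ℕ) := by simpa using congrArg Fin.val hc
          omega)]
    -- the Ψ column gives v(0, n-1) = 0
    have E0 : v (⟨0, hN⟩, ⟨n - 1, hn1⟩) = 0 := by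
      have h := hv' (Sum.inr (⟨0, hN⟩, ⟨0, Nat.one_pos⟩))
      have h2 : ∑ y : Fin N × Fin n,
          Ψ y (⟨0, hN⟩, ⟨0, Nat.one_pos⟩) * v y = 0 := by
        simpa [hM] using h
      have h0 : ∀ b ∈ (Finset.univ : Finset (Fin N × Fin n)),
          b ≠ ((⟨0, hN⟩ : Fin N), (⟨n - 1, hn1⟩ : Fin n)) →
            Ψ b (⟨0, hN⟩, ⟨0, Nat.one_pos⟩) * v b = 0 := by
        rintro ⟨i, k₂⟩ - hne
        rw [hΨ]
        by_cases hi : i = (⟨0, hN⟩ : Fin N)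
        · subst hi
          have hk2 : (k₂ : ℕ) ≠ n - 1 := by
            intro hc
            exact hne (by rw [show k₂ = (⟨n - 1, hn1⟩ : Fin n) from Fin.ext hc])
          simp [hB, hk2]
        · simp [hi]
      rw [Finset.sum_eq_single_of_mem _ (Finset.mem_univ _) h0, hΨ] at h2
      simpa [hδ1, hB] using h2
    -- downward propagation along one node
    have down : ∀ j : Fin N, v (j, ⟨n - 1, hn1⟩) = 0 → ∀ k : Fin n, v (j, k) = 0 := by
      intro j htop
      have aux : ∀ d : ℕ, ∀ k : Fin n, (k : ℕ) = n - 1 - d → v (j, k) = 0 := by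
        intro d
        induction d with
        | zero =>
          intro k hk
          rw [show k = (⟨n - 1, hn1⟩ : Fin n) from Fin.ext (by show (k : ℕ) = n - 1; omega)]
          exact htop
        | succ d ih =>
          intro k hk
          by_cases hd : n - 1 - d = n - 1 - (d + 1)
          · exact ih k (by omega)
          · have hk1 : (k : ℕ) + 1 < n := by omega
            have hvk' : v (j, ⟨(k : ℕ) + 1, hk1⟩) = 0 := ih _ (by simp; omega)
            have hc := col j ⟨(k : ℕ) + 1, hk1⟩
            rw [sumA j k ⟨(k : ℕ) + 1, hk1⟩ rfl, hvk', mul_zero] at hc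
            have hA := hA1 j k ⟨(k : ℕ) + 1, hk1⟩ rfl
            rcases mul_eq_zero.mp hc.symm with hc1 | hc2
            · exact absurd (by exact_mod_cast hc1) hA
            · exact hc2
      intro k
      exact aux (n - 1 - (k : ℕ)) k (by omega)
    -- main induction over the chain
    have main : ∀ m : ℕ, ∀ j : Fin N, (j : ℕ) = m → ∀ k : Fin n, v (j, k) = 0 := by
      intro m
      induction m with
      | zero =>
        intro j hj
        rw [show j = (⟨0, hN⟩ : Fin N) from Fin.ext hj]
        exact down _ E0
      | succ m ih =>
        intro j hj
        have hmN : m < N := by omega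
        have hv0 : ∀ k, v (⟨m, hmN⟩, k) = 0 := ih ⟨m, hmN⟩ rfl
        have hj1 : (m : ℕ) + 1 < N := by omega
        have hc := col ⟨m, hmN⟩ ⟨0, hn⟩
        rw [sumB ⟨m, hmN⟩ hj1 ⟨0, hn⟩ rfl, hv0, mul_zero] at hc
        have hW := hW1 ⟨m, hmN⟩ hj1
        have hh := hHC1 ⟨m, hmN⟩ ⟨n - 1, hn1⟩ ⟨0, hn⟩ rfl rfl
        have htop : v (⟨m + 1, hj1⟩, ⟨n - 1, hn1⟩) = 0 := by
          rcases mul_eq_zero.mp hc.symm with hc1 | hc2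
          · rcases mul_eq_zero.mp hc1 with hc3 | hc4
            · exact absurd (by exact_mod_cast hc3) hW
            · exact absurd (by exact_mod_cast hc4) hh
          · exact hc2
        rw [show j = (⟨m + 1, hj1⟩ : Fin N) from Fin.ext hj]
        exact down _ htop
    funext x
    obtain ⟨j, k⟩ := x
    exact main (j : ℕ) j rfl k
  -- conclude on the rank
  have hinj : Function.Injective (Mᵀ.mulVecLin) := by
    refine (injective_iff_map_eq_zero _).mpr fun v hv => key v ?_
    simpa [Matrix.mulVecLin_apply, Matrix.mulVec_transpose] using hv
  calc M.rank = Mᵀ.rank := (Matrix.rank_transpose M).symm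
    _ = Module.finrank ℂ (LinearMap.range Mᵀ.mulVecLin) := rfl
    _ = Module.finrank ℂ ((Fin N × Fin n) → ℂ) := LinearMap.finrank_range_of_inj hinj
    _ = N * n := by simp [Module.finrank_fintype_fun_eq_card]
end

section
/- In the directed chain network, if the root node is not under external control, i.e., δ_1 = 0 (regardless of the values of δ_2, …, δ_N), then the networked system is not controllable: there exists s ∈ ℂ such that [s·I_{Nn} − Φ, Ψ] has rank strictly less than Nn. -/
open Matrix Finset

lemma rank_lt_of_left_null {m n : Type*} [Fintype m] [Fintype n] [DecidableEq m]
    (M : Matrix m n ℂ) (v : m → ℂ) (hv : v ≠ 0) (h : v ᵥ* M = 0) :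
    M.rank < Fintype.card m := by
  rw [← M.rank_transpose]
  have hker : v ∈ LinearMap.ker Mᵀ.mulVecLin := by
    simp [Matrix.mulVecLin_apply, Matrix.mulVec_transpose, h]
  have h1 : Mᵀ.rank + Module.finrank ℂ (LinearMap.ker Mᵀ.mulVecLin) = Fintype.card m := by
    rw [Matrix.rank, LinearMap.finrank_range_add_finrank_ker,
      Module.finrank_fintype_fun_eq_card]
  have h2 : 0 < Module.finrank ℂ (LinearMap.ker Mᵀ.mulVecLin) :=
    Module.finrank_pos_iff_exists_ne_zero.mpr ⟨⟨v, hker⟩, by simpa using hv⟩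
  omega

/-- Corollary 1, necessity: in the directed chain network rooted at
node 1 (index 0), if the root node is not under external control (`δ₁ = 0`,
regardless of the other `δᵢ`), then the networked system is not controllable:
there exists `s ∈ ℂ` such that `[s·I_{Nn} − Φ, Ψ]` has rank strictly less than `N·n`. -/
theorem stmt2 (N n : ℕ) (hN : 0 < N) (hn : 0 < n)
    (A : Fin N → Matrix (Fin n) (Fin n) ℝ)
    (B : Fin N → Matrix (Fin n) (Fin 1) ℝ)
    (C : Fin N → Matrix (Fin 1) (Fin n) ℝ)
    (H : Matrix (Fin n) (Fin 1) ℝ)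
    (W : Matrix (Fin N) (Fin N) ℝ)
    (δ : Fin N → ℝ)
    -- each Aᵢ is superdiagonal with nonzero superdiagonal entries a_{i,k}
    (hA0 : ∀ (i : Fin N) (k l : Fin n), (l : ℕ) ≠ (k : ℕ) + 1 → A i k l = 0)
    (hA1 : ∀ (i : Fin N) (k l : Fin n), (l : ℕ) = (k : ℕ) + 1 → A i k l ≠ 0)
    -- each H·Cᵢ has its only nonzero entry h_{i,1} ≠ 0 at the bottom-left position
    (hHC0 : ∀ (i : Fin N) (k l : Fin n), ¬((k : ℕ) = n - 1 ∧ (l : ℕ) = 0) →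
      (H * C i) k l = 0)
    (hHC1 : ∀ (i : Fin N) (k l : Fin n), (k : ℕ) = n - 1 → (l : ℕ) = 0 →
      (H * C i) k l ≠ 0)
    -- Bᵢ = eₙ, the n-th standard basis column vector
    (hB : ∀ (i : Fin N) (k : Fin n) (l : Fin 1),
      B i k l = if (k : ℕ) = n - 1 then 1 else 0)
    -- chain topology rooted at node 1: ω_{i+1,i} ≠ 0, all other entries zero
    (hW0 : ∀ i j : Fin N, (i : ℕ) ≠ (j : ℕ) + 1 → W i j = 0)
    (hW1 : ∀ (j : Fin N) (h : (j : ℕ) + 1 < N), W ⟨(j : ℕ) + 1, h⟩ j ≠ 0)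
    -- the root node is not under external control; δᵢ ∈ {0,1} otherwise arbitrary
    (hδroot : δ ⟨0, hN⟩ = 0)
    (hδ : ∀ i : Fin N, δ i = 0 ∨ δ i = 1)
    -- the N×N block matrix Φ and the block diagonal input matrix Ψ
    (Φ : Matrix (Fin N × Fin n) (Fin N × Fin n) ℂ)
    (hΦ : ∀ x y : Fin N × Fin n, Φ x y =
      if x.1 = y.1 then ((A x.1 x.2 y.2 : ℝ) : ℂ)
      else ((W x.1 y.1 : ℝ) : ℂ) *
        ((H.map Complex.ofReal) * (C y.1).map Complex.ofReal) x.2 y.2)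
    (Ψ : Matrix (Fin N × Fin n) (Fin N × Fin 1) ℂ)
    (hΨ : ∀ (x : Fin N × Fin n) (y : Fin N × Fin 1), Ψ x y =
      if x.1 = y.1 then ((δ x.1 : ℝ) : ℂ) * ((B x.1 x.2 y.2 : ℝ) : ℂ) else 0) :
    ∃ s : ℂ,
      (Matrix.fromCols (s • (1 : Matrix (Fin N × Fin n) (Fin N × Fin n) ℂ) - Φ) Ψ).rank
        < N * n := by
  refine ⟨0, ?_⟩
  set x0 : Fin N × Fin n := (⟨0, hN⟩, ⟨n - 1, Nat.sub_lt hn one_pos⟩) with hx0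
  set v : Fin N × Fin n → ℂ := fun x => if x = x0 then 1 else 0 with hv
  have hvne : v ≠ 0 := by
    intro h
    have := congrFun h x0
    simp [hv] at this
  have hsum : ∀ {α : Type} (M : Matrix (Fin N × Fin n) α ℂ) (y : α),
      (v ᵥ* M) y = M x0 y := by
    intro α M y
    simp only [Matrix.vecMul, dotProduct, hv, ite_mul, one_mul, zero_mul]
    rw [Finset.sum_ite_eq' Finset.univ x0 (fun x => M x y)]
    simp
  -- Φ row at x0 is zero
  have hΦ0 : ∀ y : Fin N × Fin n, Φ x0 y = 0 := by
    intro y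
    rw [hΦ]
    by_cases hcase : x0.1 = y.1
    · rw [if_pos hcase]
      have : A x0.1 x0.2 y.2 = 0 := by
        apply hA0
        have hy2 : (y.2 : ℕ) < n := y.2.isLt
        have : (x0.2 : ℕ) = n - 1 := rfl
        omega
      simp [this]
    · rw [if_neg hcase]
      have : W x0.1 y.1 = 0 := by
        apply hW0
        simp [hx0]
      simp [this]
  have hΨ0 : ∀ y : Fin N × Fin 1, Ψ x0 y = 0 := by
    intro y
    rw [hΨ]
    by_cases hcase : x0.1 = y.1
    · rw [if_pos hcase]
      have : δ x0.1 = 0 := hδroot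
      simp [this]
    · rw [if_neg hcase]
  have hnull : v ᵥ* (Matrix.fromCols ((0:ℂ) • (1 : Matrix (Fin N × Fin n) (Fin N × Fin n) ℂ) - Φ) Ψ) = 0 := by
    funext y
    rw [hsum]
    cases y with
    | inl j =>
      rw [Matrix.fromCols_apply_inl]
      simp [Matrix.sub_apply, hΦ0 j]
    | inr j =>
      rw [Matrix.fromCols_apply_inr]
      simp [hΨ0 j]
  have := rank_lt_of_left_null _ v hvne hnull
  simpa [Fintype.card_prod] using this
end

section
/- Suppose node i has no external control input, i.e., δ_i = 0. If the networked system (Φ, Ψ) is controllable, then for every complex number s, the n×(Nn) block matrix [−ω_{i1}·H·C_1, −ω_{i2}·H·C_2, …, s·I_n − A_i, …, −ω_{iN}·H·C_N] (whose j-th n×n block is −ω_{ij}·H·C_j for j ≠ i and s·I_n − A_i for j = i) has full row rank n. -/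
open Matrix Finset

/-- Theorem 2: if node `i` has no external control input (`δᵢ = 0`) and the
networked system `(Φ, Ψ)` is controllable, then for every `s ∈ ℂ` the `n×(Nn)` block matrix
`[−ω_{i1}·H·C₁, …, s·I − Aᵢ, …, −ω_{iN}·H·C_N]` has full row rank `n`. -/
theorem stmt4 (N n m p : ℕ) (hN : 1 ≤ N)
    (A : Fin N → Matrix (Fin n) (Fin n) ℝ)
    (B : Fin N → Matrix (Fin n) (Fin p) ℝ)
    (C : Fin N → Matrix (Fin m) (Fin n) ℝ)
    (H : Matrix (Fin n) (Fin m) ℝ)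
    (W : Matrix (Fin N) (Fin N) ℝ) (hW : ∀ i, W i i = 0)
    (δ : Fin N → ℝ) (hδ : ∀ i, δ i = 0 ∨ δ i = 1)
    (Φ : Matrix (Fin N × Fin n) (Fin N × Fin n) ℂ)
    (hΦ : ∀ x y : Fin N × Fin n, Φ x y =
      if x.1 = y.1 then ((A x.1 x.2 y.2 : ℝ) : ℂ)
      else ((W x.1 y.1 : ℝ) : ℂ) *
        ((H.map Complex.ofReal) * (C y.1).map Complex.ofReal) x.2 y.2)
    (Ψ : Matrix (Fin N × Fin n) (Fin N × Fin p) ℂ)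
    (hΨ : ∀ (x : Fin N × Fin n) (y : Fin N × Fin p), Ψ x y =
      if x.1 = y.1 then ((δ x.1 : ℝ) : ℂ) * ((B x.1 x.2 y.2 : ℝ) : ℂ) else 0)
    -- node i has no external control input
    (i : Fin N) (hi : δ i = 0)
    -- the networked system is controllable
    (hctrb : IsControllable Φ Ψ) :
    ∀ (s : ℂ) (R : Matrix (Fin n) (Fin N × Fin n) ℂ),
      (∀ (k : Fin n) (y : Fin N × Fin n), R k y =
        if y.1 = i then (s • (1 : Matrix (Fin n) (Fin n) ℂ) - (A i).map Complex.ofReal) k y.2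
        else (-((W i y.1 : ℝ) : ℂ)) *
          ((H.map Complex.ofReal) * (C y.1).map Complex.ofReal) k y.2) →
      R.rank = n := by
  intro s R hR
  -- the full PBH matrix
  set F : Matrix (Fin N × Fin n) ((Fin N × Fin n) ⊕ (Fin N × Fin p)) ℂ :=
    Matrix.fromCols (s • (1 : Matrix (Fin N × Fin n) (Fin N × Fin n) ℂ) - Φ) Ψ with hF
  have hrankF : F.rank = Fintype.card (Fin N × Fin n) := hctrb s
  -- rows of F are linearly independent
  have hindF : LinearIndependent ℂ (fun x : Fin N × Fin n => F x) := by
    rw [linearIndependent_iff_card_eq_finrank_span]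
    rw [F.rank_eq_finrank_span_row] at hrankF
    exact hrankF.symm
  -- rows of R are linearly independent
  have hindR : LinearIndependent ℂ (fun k : Fin n => R k) := by
    rw [Fintype.linearIndependent_iff]
    intro c hc k
    rw [Fintype.linearIndependent_iff] at hindF
    have key : ∀ x : Fin N × Fin n, (if x.1 = i then c x.2 else 0) = 0 := by
      apply hindF
      funext z
      have hsum : (∑ x : Fin N × Fin n, (if x.1 = i then c x.2 else 0) • F x) z
          = ∑ k' : Fin n, c k' * F (i, k') z := by
        rw [Finset.sum_apply]
        simp only [Pi.smul_apply, smul_eq_mul, ite_mul, zero_mul]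
        rw [Fintype.sum_prod_type]
        rw [Finset.sum_eq_single i (fun j _ hj => by simp [hj]) (by simp)]
        simp
      rw [hsum]
      cases z with
      | inl y =>
        have hFR : ∀ k' : Fin n, F (i, k') (Sum.inl y) = R k' y := by
          intro k'
          simp only [hF, Matrix.fromCols_apply_inl, Matrix.sub_apply, Matrix.smul_apply,
            Matrix.one_apply, hΦ, hR, smul_eq_mul]
          by_cases hy : y.1 = i
          · obtain ⟨y1, y2⟩ := y
            simp only at hy
            subst hy
            simp [Prod.ext_iff, Matrix.sub_apply, Matrix.smul_apply, Matrix.one_apply,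
              Matrix.map_apply, smul_eq_mul]
          · obtain ⟨y1, y2⟩ := y
            simp only at hy
            rw [if_neg (by simp [Prod.ext_iff, Ne.symm hy]), if_neg (Ne.symm hy), if_neg hy]
            ring
        simp only [hFR]
        have := congrFun hc y
        rw [Finset.sum_apply] at this
        simpa [smul_eq_mul] using this
      | inr y =>
        have : ∀ k' : Fin n, F (i, k') (Sum.inr y) = 0 := by
          intro k'
          simp only [hF, Matrix.fromCols_apply_inr, hΨ, hi]
          split <;> simp
        simp [this]
    have := key (i, k)
    simpa using this
  -- conclude
  have := hindR.rank_matrix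
  simpa using this
end

section
/- Let ξ = (ξ_1,…,ξ_N) ∈ ℂ^N be a left eigenvector of W associated with eigenvalue s_0, i.e., ξᵀ W = s_0 ξᵀ, and suppose ξᵀ Δ = 0 (equivalently ξ_i δ_i = 0 for all i) and that there is a matrix M ∈ ℂ^{n×n} with A_i + s_0·H·C_i = M for every i = 1,…,N. Then for any differentiable functions x_1,…,x_N : ℝ → ℂ^n and any functions u_1,…,u_N : ℝ → ℝ^p satisfying the network dynamics ẋ_i(t) = A_i x_i(t) + Σ_{j=1}^{N} ω_{ij}·H·C_j x_j(t) + δ_i B_i u_i(t) for all t and all i, the function z(t) := Σ_{i=1}^{N} ξ_i x_i(t) satisfies the autonomous linear equation ż(t) = M z(t) for all t. -/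
open Matrix Finset

/-- key step of Theorem 4: if `ξ` is a left eigenvector of `W` for `s₀`
with `ξᵀΔ = 0`, and `Aᵢ + s₀·H·Cᵢ = M` for every `i`, then along any solution of the
network dynamics `ẋᵢ = Aᵢxᵢ + ∑ⱼ ω_{ij}·H·Cⱼxⱼ + δᵢBᵢuᵢ`, the function
`z(t) = ∑ᵢ ξᵢ xᵢ(t)` satisfies `ż = M z`. -/
theorem stmt7 (N n m p : ℕ) (hN : 1 ≤ N)
    (A : Fin N → Matrix (Fin n) (Fin n) ℝ)
    (B : Fin N → Matrix (Fin n) (Fin p) ℝ)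
    (C : Fin N → Matrix (Fin m) (Fin n) ℝ)
    (H : Matrix (Fin n) (Fin m) ℝ)
    (W : Matrix (Fin N) (Fin N) ℝ) (hW : ∀ i, W i i = 0)
    (δ : Fin N → ℝ) (hδ : ∀ i, δ i = 0 ∨ δ i = 1)
    -- ξ is a left eigenvector of W associated with eigenvalue s₀
    (s₀ : ℂ) (ξ : Fin N → ℂ)
    (hξ : ξ ᵥ* (W.map Complex.ofReal) = s₀ • ξ)
    -- ξᵀ Δ = 0
    (hξΔ : ∀ i : Fin N, ξ i * (δ i : ℂ) = 0)
    -- the matrices Aᵢ + s₀·H·Cᵢ all equal M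
    (M : Matrix (Fin n) (Fin n) ℂ)
    (hM : ∀ i : Fin N,
      (A i).map Complex.ofReal
        + s₀ • ((H.map Complex.ofReal) * (C i).map Complex.ofReal) = M)
    -- x, u solve the network dynamics
    (x : Fin N → ℝ → (Fin n → ℂ))
    (u : Fin N → ℝ → (Fin p → ℝ))
    (hx : ∀ (i : Fin N) (t : ℝ),
      HasDerivAt (x i)
        (((A i).map Complex.ofReal).mulVec (x i t)
          + ∑ j : Fin N, ((W i j : ℝ) : ℂ) •
              (((H.map Complex.ofReal) * (C j).map Complex.ofReal).mulVec (x j t))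
          + ((δ i : ℝ) : ℂ) •
              (((B i).map Complex.ofReal).mulVec (fun l => ((u i t l : ℝ) : ℂ)))) t) :
    ∀ t : ℝ,
      HasDerivAt (fun τ => ∑ i : Fin N, ξ i • x i τ)
        (M.mulVec (∑ i : Fin N, ξ i • x i t)) t := by
  intro t
  have h1 : HasDerivAt (fun τ => ∑ i : Fin N, ξ i • x i τ)
      (∑ i : Fin N, ξ i • (((A i).map Complex.ofReal).mulVec (x i t)
          + ∑ j : Fin N, ((W i j : ℝ) : ℂ) •
              (((H.map Complex.ofReal) * (C j).map Complex.ofReal).mulVec (x j t))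
          + ((δ i : ℝ) : ℂ) •
              (((B i).map Complex.ofReal).mulVec (fun l => ((u i t l : ℝ) : ℂ))))) t :=
    HasDerivAt.fun_sum fun i _ => (hx i t).const_smul (ξ i)
  convert h1 using 1
  have key : ∀ i : Fin N, M.mulVec (x i t)
      = ((A i).map Complex.ofReal).mulVec (x i t)
        + s₀ • (((H.map Complex.ofReal) * (C i).map Complex.ofReal).mulVec (x i t)) := by
    intro i
    rw [← hM i, Matrix.add_mulVec, Matrix.smul_mulVec]
  calc M.mulVec (∑ i : Fin N, ξ i • x i t)
      = ∑ i : Fin N, ξ i • M.mulVec (x i t) := by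
        simp only [← Matrix.mulVecLin_apply, map_sum, _root_.map_smul]
    _ = ∑ i : Fin N, (ξ i • ((A i).map Complex.ofReal).mulVec (x i t)
          + (s₀ * ξ i) • (((H.map Complex.ofReal) * (C i).map Complex.ofReal).mulVec (x i t))) := by
        refine Finset.sum_congr rfl fun i _ => ?_
        rw [key i, smul_add, smul_smul, mul_comm]
    _ = ∑ i : Fin N, ξ i • (((A i).map Complex.ofReal).mulVec (x i t)
          + ∑ j : Fin N, ((W i j : ℝ) : ℂ) •
              (((H.map Complex.ofReal) * (C j).map Complex.ofReal).mulVec (x j t))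
          + ((δ i : ℝ) : ℂ) •
              (((B i).map Complex.ofReal).mulVec (fun l => ((u i t l : ℝ) : ℂ)))) := by
        have hδ0 : ∀ i : Fin N, ξ i • (((δ i : ℝ) : ℂ) •
            (((B i).map Complex.ofReal).mulVec (fun l => ((u i t l : ℝ) : ℂ))))
            = 0 := by
          intro i
          rw [smul_smul, hξΔ i, zero_smul]
        have hswap : ∑ i : Fin N, ξ i • (∑ j : Fin N, ((W i j : ℝ) : ℂ) •
              (((H.map Complex.ofReal) * (C j).map Complex.ofReal).mulVec (x j t)))
            = ∑ j : Fin N, (s₀ * ξ j) •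
              (((H.map Complex.ofReal) * (C j).map Complex.ofReal).mulVec (x j t)) := by
          simp only [Finset.smul_sum, smul_smul]
          rw [Finset.sum_comm]
          refine Finset.sum_congr rfl fun j _ => ?_
          rw [← Finset.sum_smul]
          congr 1
          have := congrFun hξ j
          simpa [Matrix.vecMul, dotProduct, Matrix.map_apply] using this
        simp only [smul_add, Finset.sum_add_distrib, hδ0, Finset.sum_const_zero, add_zero,
          hswap]
end

section
/- In the homogeneous networked system, let m be the number of nodes with external control inputs (the number of indices i with δ_i = 1), and suppose N > m·rank(B). If the pair (Φ, Ψ) is controllable, then the pair (A, C) is observable. -/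
open Matrix Finset Kronecker

/-- PBH test: the pair `(M, C)` is observable iff `[s·I − M; C]` has full column rank
for every `s ∈ ℂ`. -/
def IsObservable {q r : Type*} [Fintype q] [Fintype r] [DecidableEq q]
    (M : Matrix q q ℂ) (C : Matrix r q ℂ) : Prop :=
  ∀ s : ℂ, (Matrix.fromRows (s • (1 : Matrix q q ℂ) - M) C).rank = Fintype.card q

open Module Submodule in
/-- Complexification does not increase the rank of a real matrix. -/
lemma aux_rank_map_ofReal_le {a b : Type*} [Fintype a] [Fintype b]
    (M : Matrix a b ℝ) : (M.map (Complex.ofReal)).rank ≤ M.rank := by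
  classical
  rw [Matrix.rank_eq_finrank_span_cols, Matrix.rank_eq_finrank_span_cols]
  set f : (a → ℝ) →ₗ[ℝ] (a → ℂ) := LinearMap.compLeft Complex.ofRealAm.toLinearMap a with hf
  set V : Submodule ℝ (a → ℝ) := Submodule.span ℝ (Set.range Mᵀ) with hV
  set r := finrank ℝ V with hr
  set bb : Basis (Fin r) ℝ V := Module.finBasis ℝ V with hbb
  set g : Fin r → (a → ℂ) := fun i => f ((bb i : a → ℝ)) with hg
  have hsub : Submodule.span ℂ (Set.range (M.map Complex.ofReal)ᵀ)
      ≤ Submodule.span ℂ (Set.range g) := by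
    rw [Submodule.span_le]
    rintro _ ⟨j, rfl⟩
    have hcol : (M.map Complex.ofReal)ᵀ j = f (Mᵀ j) := by
      funext i
      simp [hf, Matrix.map_apply, LinearMap.compLeft]
    rw [hcol]
    have hx : (Mᵀ j) ∈ V := Submodule.subset_span ⟨j, rfl⟩
    have hx2 : (Mᵀ j) ∈ Submodule.span ℝ (Set.range fun i => (bb i : a → ℝ)) := by
      have h3 : (⟨Mᵀ j, hx⟩ : V) ∈ Submodule.span ℝ (Set.range bb) := bb.mem_span _
      have h4 := Submodule.mem_map_of_mem (f := V.subtype) h3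
      rw [Submodule.map_span] at h4
      have h5 : V.subtype '' Set.range bb = Set.range fun i => (bb i : a → ℝ) := by
        rw [← Set.range_comp]; rfl
      rwa [h5] at h4
    have hmap : f (Mᵀ j) ∈ Submodule.map f
        (Submodule.span ℝ (Set.range fun i => (bb i : a → ℝ))) :=
      Submodule.mem_map_of_mem hx2
    rw [Submodule.map_span] at hmap
    have hle : Submodule.span ℝ (f '' Set.range fun i => (bb i : a → ℝ))
        ≤ (Submodule.span ℂ (Set.range g)).restrictScalars ℝ := by
      rw [Submodule.span_le]
      rintro _ ⟨_, ⟨i, rfl⟩, rfl⟩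
      exact Submodule.subset_span ⟨i, rfl⟩
    exact hle hmap
  refine le_trans (Submodule.finrank_mono hsub) ?_
  refine le_trans (finrank_span_le_card (Set.range g)) ?_
  rw [Set.toFinset_range]
  exact le_trans (Finset.card_image_le) (by simp; exact le_rfl)

open Module in
/-- The rank of a block column concatenation is at most the sum of the ranks. -/
lemma aux_rank_fromColumns_le {q r s : Type*} [Fintype q] [Fintype r] [Fintype s]
    (P : Matrix q r ℂ) (Q : Matrix q s ℂ) :
    (Matrix.fromCols P Q).rank ≤ P.rank + Q.rank := by
  rw [Matrix.rank_eq_finrank_span_cols, Matrix.rank_eq_finrank_span_cols,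
    Matrix.rank_eq_finrank_span_cols]
  have hrange : Set.range (Matrix.fromCols P Q)ᵀ = Set.range Pᵀ ∪ Set.range Qᵀ := by
    rw [Matrix.transpose_fromCols]
    exact Set.Sum.elim_range _ _
  rw [show Set.range (Matrix.fromCols P Q).col = Set.range P.col ∪ Set.range Q.col from hrange,
    Submodule.span_union]
  exact Submodule.finrank_add_le_finrank_add_finrank _ _

open Module in
/-- Rank bound for the Kronecker product of a diagonal matrix with another matrix. -/
lemma aux_rank_diag_kron_le {N n p : ℕ} (d : Fin N → ℂ) (B : Matrix (Fin n) (Fin p) ℂ)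
    (S : Finset (Fin N)) (hS : ∀ i, d i ≠ 0 → i ∈ S) :
    ((Matrix.diagonal d) ⊗ₖ B).rank ≤ S.card * B.rank := by
  classical
  rw [Matrix.rank_eq_finrank_span_cols]
  set emb : Fin N → ((Fin n → ℂ) →ₗ[ℂ] (Fin N × Fin n → ℂ)) := fun k =>
    { toFun := fun y q => if q.1 = k then y q.2 else 0
      map_add' := by intro y z; funext q; by_cases h : q.1 = k <;> simp [h]
      map_smul' := by intro c y; funext q; by_cases h : q.1 = k <;> simp [h] } with hemb
  set V : Fin N → Submodule ℂ (Fin N × Fin n → ℂ) := fun k =>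
    Submodule.map (emb k) (Submodule.span ℂ (Set.range Bᵀ)) with hV
  have hcol : Submodule.span ℂ (Set.range ((Matrix.diagonal d) ⊗ₖ B)ᵀ) ≤ S.sup V := by
    rw [Submodule.span_le]
    rintro _ ⟨⟨k, l⟩, rfl⟩
    by_cases hk : d k = 0
    · have hzero : ((Matrix.diagonal d) ⊗ₖ B)ᵀ (k, l) = 0 := by
        funext q
        by_cases h : q.1 = k <;>
          simp [Matrix.transpose_apply, Matrix.kroneckerMap_apply, Matrix.diagonal_apply, h, hk]
      rw [hzero]
      exact Submodule.zero_mem _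
    · have hmem : (d k • Bᵀ l) ∈ Submodule.span ℂ (Set.range Bᵀ) :=
        Submodule.smul_mem _ _ (Submodule.subset_span ⟨l, rfl⟩)
      have heq : ((Matrix.diagonal d) ⊗ₖ B)ᵀ (k, l) = emb k (d k • Bᵀ l) := by
        funext q
        by_cases h : q.1 = k <;>
          simp [hemb, Matrix.transpose_apply, Matrix.kroneckerMap_apply,
            Matrix.diagonal_apply, h]
      rw [heq]
      exact Finset.le_sup (f := V) (hS k hk) (Submodule.mem_map_of_mem hmem)
  refine le_trans (Submodule.finrank_mono hcol) ?_
  have key : ∀ T : Finset (Fin N), finrank ℂ ↥(T.sup V) ≤ T.card * B.rank := by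
    intro T
    induction T using Finset.induction with
    | empty => simp
    | @insert k T hk ih =>
      rw [Finset.sup_insert]
      refine le_trans (Submodule.finrank_add_le_finrank_add_finrank _ _) ?_
      have h1 : finrank ℂ (V k) ≤ B.rank := by
        rw [Matrix.rank_eq_finrank_span_cols]
        exact Submodule.finrank_map_le _ _
      rw [Finset.card_insert_of_notMem hk]
      calc finrank ℂ ↥(V k) + finrank ℂ ↥(T.sup V) ≤ B.rank + T.card * B.rank :=
            Nat.add_le_add h1 ih
        _ = (T.card + 1) * B.rank := by ring
  exact key S

/-- Kronecker product acting on a decomposable vector. -/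
lemma aux_kron_mulVec {α β γ η : Type*} [Fintype α] [Fintype β] [Fintype γ] [Fintype η]
    (M : Matrix α β ℂ) (P : Matrix γ η ℂ) (x : β → ℂ) (y : η → ℂ) :
    (M ⊗ₖ P) *ᵥ (fun q : β × η => x q.1 * y q.2)
      = fun q : α × γ => (M *ᵥ x) q.1 * (P *ᵥ y) q.2 := by
  funext q
  simp only [Matrix.mulVec, dotProduct, Fintype.sum_prod_type,
    Matrix.kroneckerMap_apply]
  rw [Finset.sum_mul_sum]
  refine Finset.sum_congr rfl fun k _ => Finset.sum_congr rfl fun l _ => by ring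

/-- Lemma 2: in the homogeneous networked system with
`Φ = I_N ⊗ A + W ⊗ (H·C)` and `Ψ = Δ ⊗ B`, if the number `m` of controlled nodes
satisfies `N > m·rank(B)` and `(Φ, Ψ)` is controllable, then `(A, C)` is observable. -/
theorem stmt9 (N n m p : ℕ) (hN : 1 ≤ N)
    (A : Matrix (Fin n) (Fin n) ℝ)
    (B : Matrix (Fin n) (Fin p) ℝ)
    (C : Matrix (Fin m) (Fin n) ℝ)
    (H : Matrix (Fin n) (Fin m) ℝ)
    (W : Matrix (Fin N) (Fin N) ℝ)
    (δ : Fin N → ℝ) (hδ : ∀ i, δ i = 0 ∨ δ i = 1)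
    -- N exceeds (number of controlled nodes) · rank(B)
    (hcount : N > (Finset.univ.filter (fun i : Fin N => δ i = 1)).card * B.rank)
    -- Φ = I_N ⊗ A + W ⊗ (H·C) and Ψ = Δ ⊗ B are controllable
    (hctrb : IsControllable
      ((1 : Matrix (Fin N) (Fin N) ℂ) ⊗ₖ (A.map Complex.ofReal)
        + (W.map Complex.ofReal) ⊗ₖ ((H.map Complex.ofReal) * (C.map Complex.ofReal)))
      (((Matrix.diagonal δ).map Complex.ofReal) ⊗ₖ (B.map Complex.ofReal))) :
    IsObservable (A.map Complex.ofReal) (C.map Complex.ofReal) := by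
  classical
  intro s
  by_contra hrank
  set A' := A.map Complex.ofReal with hA'
  set B' := B.map Complex.ofReal with hB'
  set C' := C.map Complex.ofReal with hC'
  set H' := H.map Complex.ofReal with hH'
  set W' := W.map Complex.ofReal with hW'
  set Φ : Matrix (Fin N × Fin n) (Fin N × Fin n) ℂ :=
    (1 : Matrix (Fin N) (Fin N) ℂ) ⊗ₖ A' + W' ⊗ₖ (H' * C') with hΦ
  set Ψ : Matrix (Fin N × Fin n) (Fin N × Fin p) ℂ :=
    ((Matrix.diagonal δ).map Complex.ofReal) ⊗ₖ B' with hΨ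
  -- extract an unobservable eigenvector v
  set Mo : Matrix (Fin n ⊕ Fin m) (Fin n) ℂ :=
    Matrix.fromRows (s • (1 : Matrix (Fin n) (Fin n) ℂ) - A') C' with hMo
  have hle : Mo.rank ≤ Fintype.card (Fin n) := Matrix.rank_le_card_width _
  have hlt : Mo.rank < Fintype.card (Fin n) := lt_of_le_of_ne hle hrank
  have hker := LinearMap.finrank_range_add_finrank_ker Mo.mulVecLin
  rw [Module.finrank_fintype_fun_eq_card] at hker
  have hkerne : LinearMap.ker Mo.mulVecLin ≠ ⊥ := by
    intro h
    rw [h, finrank_bot] at hker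
    have : Mo.rank = Fintype.card (Fin n) := by
      simpa [Matrix.rank] using hker
    exact absurd this hrank
  obtain ⟨v, hv, hvne⟩ := (Submodule.ne_bot_iff _).mp hkerne
  rw [LinearMap.mem_ker, Matrix.mulVecLin_apply, hMo, Matrix.fromRows_mulVec] at hv
  have hv1 : (s • (1 : Matrix (Fin n) (Fin n) ℂ) - A') *ᵥ v = 0 := by
    funext i; exact congrFun hv (Sum.inl (i : Fin n))
  have hv2 : C' *ᵥ v = 0 := by
    funext i; exact congrFun hv (Sum.inr (i : Fin m))
  have hAv : A' *ᵥ v = s • v := by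
    have := hv1
    rw [Matrix.sub_mulVec, Matrix.smul_mulVec, Matrix.one_mulVec, sub_eq_zero] at this
    exact this.symm
  -- the tensor map L x = x ⊗ v
  set L : (Fin N → ℂ) →ₗ[ℂ] (Fin N × Fin n → ℂ) :=
    { toFun := fun x q => x q.1 * v q.2
      map_add' := by intro x y; funext q; simp [add_mul]
      map_smul' := by intro c x; funext q; simp [smul_eq_mul]; ring } with hL
  have hPhiL : ∀ x : Fin N → ℂ, Φ *ᵥ (L x) = s • (L x) := by
    intro x
    have h1 : ((1 : Matrix (Fin N) (Fin N) ℂ) ⊗ₖ A') *ᵥ (L x)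
        = fun q : Fin N × Fin n => ((1 : Matrix (Fin N) (Fin N) ℂ) *ᵥ x) q.1 * (A' *ᵥ v) q.2 :=
      aux_kron_mulVec _ _ _ _
    have h2 : (W' ⊗ₖ (H' * C')) *ᵥ (L x)
        = fun q : Fin N × Fin n => (W' *ᵥ x) q.1 * ((H' * C') *ᵥ v) q.2 :=
      aux_kron_mulVec _ _ _ _
    have hHC : (H' * C') *ᵥ v = 0 := by
      rw [← Matrix.mulVec_mulVec, hv2, Matrix.mulVec_zero]
    rw [hΦ, Matrix.add_mulVec, h1, h2]
    funext q
    simp [hHC, hAv, Matrix.one_mulVec, hL, smul_eq_mul]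
    ring
  set P : Matrix (Fin N × Fin n) (Fin N × Fin n) ℂ :=
    s • (1 : Matrix (Fin N × Fin n) (Fin N × Fin n) ℂ) - Φ with hP
  have hrangeL : LinearMap.range L ≤ LinearMap.ker P.mulVecLin := by
    rintro _ ⟨x, rfl⟩
    rw [LinearMap.mem_ker, Matrix.mulVecLin_apply, hP, Matrix.sub_mulVec,
      Matrix.smul_mulVec, Matrix.one_mulVec, hPhiL, sub_self]
  have hLinj : Function.Injective L := by
    rw [← LinearMap.ker_eq_bot]
    rw [Submodule.eq_bot_iff]
    intro x hx
    rw [LinearMap.mem_ker] at hx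
    obtain ⟨j, hj⟩ := Function.ne_iff.mp hvne
    funext i
    have := congrFun hx (i, j)
    simp only [hL, LinearMap.coe_mk, AddHom.coe_mk] at this
    have : x i * v j = 0 := this
    simp only [Pi.zero_apply]
    exact (mul_eq_zero.mp this).resolve_right hj
  have hrangeN : Module.finrank ℂ (LinearMap.range L) = N := by
    rw [LinearMap.finrank_range_of_inj hLinj, Module.finrank_fintype_fun_eq_card,
      Fintype.card_fin]
  have hkerN : N ≤ Module.finrank ℂ (LinearMap.ker P.mulVecLin) := by
    have h6 : Module.finrank ℂ (LinearMap.range L)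
        ≤ Module.finrank ℂ (LinearMap.ker P.mulVecLin) := Submodule.finrank_mono hrangeL
    omega
  have hrn := LinearMap.finrank_range_add_finrank_ker P.mulVecLin
  rw [Module.finrank_fintype_fun_eq_card] at hrn
  have hrn' : P.rank + Module.finrank ℂ (LinearMap.ker P.mulVecLin)
      = Fintype.card (Fin N × Fin n) := hrn
  have hfc := hctrb s
  have hfcle : Fintype.card (Fin N × Fin n) ≤ P.rank + Ψ.rank := by
    rw [← hfc]
    exact aux_rank_fromColumns_le _ _
  have hΨle : Ψ.rank ≤ (Finset.univ.filter (fun i : Fin N => δ i = 1)).card * B.rank := by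
    have hdiag : (Matrix.diagonal δ).map Complex.ofReal
        = Matrix.diagonal (fun i => (δ i : ℂ)) :=
      Matrix.diagonal_map (by simp)
    rw [hΨ, hdiag]
    refine le_trans (aux_rank_diag_kron_le _ _ (Finset.univ.filter (fun i : Fin N => δ i = 1)) ?_) ?_
    · intro i hi
      rcases hδ i with h | h
      · exact absurd (by simp [h]) hi
      · simp [h]
    · exact Nat.mul_le_mul_left _ (aux_rank_map_ofReal_le B)
  -- combine
  have hbc : Module.finrank ℂ (LinearMap.ker P.mulVecLin) ≤ Ψ.rank := by
    have : P.rank + Module.finrank ℂ (LinearMap.ker P.mulVecLin) ≤ P.rank + Ψ.rank := by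
      rw [hrn']; exact hfcle
    exact Nat.le_of_add_le_add_left this
  have : N ≤ (Finset.univ.filter (fun i : Fin N => δ i = 1)).card * B.rank :=
    le_trans hkerN (le_trans hbc hΨle)
  omega
end

section
/- Suppose |ν| < N (at least one node has no external control input), H = (0,…,0,κ_n)ᵀ ∈ ℝ^{n×1} with κ_n ≠ 0, and C = (τ_1, 0,…,0) ∈ ℝ^{1×n} with τ_1 ≠ 0. Then the pair (Φ, Ψ) is controllable provided the following two conditions hold: (a) every family of column vectors α_1,…,α_N ∈ ℂ^{n×1} satisfying α_iᵀA = 0 for all i = 1,…,N and α_iᵀB = 0 for every i ∈ ν, with not all α_i zero, satisfies Wᵀρᵀ ≠ 0, where ρ = [α_1,…,α_N] ∈ ℂ^{n×N} (equivalently, there exists i with Σ_{j=1}^{N} ω_{ji} α_j ≠ 0); and (b) for every nonzero s ∈ ℂ, the N×(2N) matrix [I_N − γ(s)·W, η(s)·Δ] has rank N, where γ(s) = C(s·I_n − A)^{−1}H ∈ ℂ and η(s) = C(s·I_n − A)^{−1}B ∈ ℂ. -/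
open Matrix Finset Kronecker

-- auxiliary lemmas
lemma fullRank_iff_leftKernel {m r : Type*} [Fintype m] [Fintype r] [DecidableEq m]
    (M : Matrix m r ℂ) :
    M.rank = Fintype.card m ↔ ∀ x : m → ℂ, x ᵥ* M = 0 → x = 0 := by
  rw [← Matrix.rank_transpose]
  unfold Matrix.rank
  have hrn := (Mᵀ.mulVecLin).finrank_range_add_finrank_ker
  rw [Module.finrank_pi] at hrn
  constructor
  · intro h x hx
    have hker : LinearMap.ker Mᵀ.mulVecLin = ⊥ := by
      have : Module.finrank ℂ (LinearMap.ker Mᵀ.mulVecLin) = 0 := by omega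
      exact Submodule.finrank_eq_zero.mp this
    have : x ∈ LinearMap.ker Mᵀ.mulVecLin := by
      simp [Matrix.mulVecLin_apply, Matrix.mulVec_transpose, hx]
    rwa [hker, Submodule.mem_bot] at this
  · intro h
    have hker : LinearMap.ker Mᵀ.mulVecLin = ⊥ := by
      ext x
      simp only [LinearMap.mem_ker, Submodule.mem_bot, Matrix.mulVecLin_apply,
        Matrix.mulVec_transpose]
      exact ⟨h x, by rintro rfl; simp⟩
    rw [hker] at hrn
    simp at hrn
    omega

-- extraction lemma for the Φ block
lemma entry_eq (N n : ℕ) (hn : 0 < n) (s : ℂ) (τc κc : ℂ)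
    (Am HCm : Matrix (Fin n) (Fin n) ℂ)
    (ln : Fin n)
    (hAm : ∀ l k : Fin n, Am l k = if (k : ℕ) = (l : ℕ) + 1 then 1 else 0)
    (hHCm : ∀ l k : Fin n, HCm l k = (if l = ln then κc else 0) * (if (k:ℕ) = 0 then τc else 0))
    (Wm : Matrix (Fin N) (Fin N) ℂ)
    (x : Fin N × Fin n → ℂ)
    (h : x ᵥ* (s • (1 : Matrix (Fin N × Fin n) (Fin N × Fin n) ℂ)
      - ((1 : Matrix (Fin N) (Fin N) ℂ) ⊗ₖ Am + Wm ⊗ₖ HCm)) = 0)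
    (i : Fin N) (k : Fin n) :
    s * x (i, k) = (∑ l, x (i, l) * Am l k)
      + (if (k:ℕ) = 0 then τc * κc * ∑ j, Wm j i * x (j, ln) else 0) := by
  have h' := congrFun h (i, k)
  simp only [Matrix.vecMul, dotProduct, Pi.zero_apply, Matrix.sub_apply,
    Matrix.add_apply, Matrix.smul_apply, Matrix.one_apply, Matrix.kroneckerMap_apply,
    smul_eq_mul, Fintype.sum_prod_type] at h'
  have e1 : ∀ (j : Fin N) (l : Fin n),
      x (j, l) * ((s * if (j, l) = (i, k) then (1:ℂ) else 0)
        - ((if j = i then (1:ℂ) else 0) * Am l k + Wm j i * HCm l k))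
      = (if (j, l) = (i, k) then s * x (i, k) else 0)
        - ((if j = i then x (j, l) * Am l k else 0) + x (j, l) * (Wm j i * HCm l k)) := by
    intro j l
    rcases eq_or_ne (j, l) (i, k) with h1 | h1
    · injection h1 with h2 h3; subst h2; subst h3; simp; ring
    · rcases eq_or_ne j i with rfl | h2
      · simp [h1]; ring
      · simp [h1, h2]
  simp only [e1, Finset.sum_sub_distrib, Finset.sum_add_distrib] at h'
  have S1 : ∑ j : Fin N, ∑ l : Fin n, (if (j, l) = (i, k) then s * x (i, k) else 0)
      = s * x (i, k) := by
    simp [Prod.mk.injEq, ite_and, Finset.sum_ite_eq']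
  have S2 : ∑ j : Fin N, ∑ l : Fin n, (if j = i then x (j, l) * Am l k else 0)
      = ∑ l, x (i, l) * Am l k := by
    rw [Finset.sum_comm]
    simp [Finset.sum_ite_eq']
  have S3 : ∑ j : Fin N, ∑ l : Fin n, x (j, l) * (Wm j i * HCm l k)
      = (if (k:ℕ) = 0 then τc * κc * ∑ j, Wm j i * x (j, ln) else 0) := by
    simp only [hHCm]
    by_cases hk : (k:ℕ) = 0
    · simp only [hk, if_true]
      rw [Finset.mul_sum]
      apply Finset.sum_congr rfl
      intro j _
      rw [Finset.sum_eq_single ln]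
      · simp; ring
      · intro l _ hl; simp [hl]
      · simp
    · simp [hk]
  rw [S1, S2, S3] at h'
  linear_combination h'

lemma psi_eq (N n : ℕ) (Δm : Matrix (Fin N) (Fin N) ℂ) (Bm : Matrix (Fin n) (Fin 1) ℂ)
    (ln : Fin n) (δc : Fin N → ℂ)
    (hΔm : ∀ j i, Δm j i = if j = i then δc j else 0)
    (hBm : ∀ l l0, Bm l l0 = if l = ln then 1 else 0)
    (x : Fin N × Fin n → ℂ)
    (h : x ᵥ* (Δm ⊗ₖ Bm) = 0) (i : Fin N) : δc i * x (i, ln) = 0 := by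
  have h' := congrFun h (i, 0)
  simp only [Matrix.vecMul, dotProduct, Pi.zero_apply, Matrix.kroneckerMap_apply,
    Fintype.sum_prod_type, hΔm, hBm, mul_ite, ite_mul, zero_mul, mul_zero, mul_one,
    Finset.sum_ite_eq', Finset.mem_univ, if_true] at h'
  linear_combination h'

lemma shift_sum (n : ℕ) (Am : Matrix (Fin n) (Fin n) ℂ)
    (hAm : ∀ l k : Fin n, Am l k = if (k : ℕ) = (l : ℕ) + 1 then 1 else 0)
    (v : Fin n → ℂ) (k : Fin n) :
    ∑ l, v l * Am l k = if h : 0 < (k : ℕ) then v ⟨(k : ℕ) - 1, by omega⟩ else 0 := by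
  by_cases h : 0 < (k : ℕ)
  · rw [dif_pos h, Finset.sum_eq_single ⟨(k : ℕ) - 1, by omega⟩]
    · rw [hAm, if_pos (by simp; omega)]; ring
    · intro l _ hl
      have hlv : (l : ℕ) ≠ (k : ℕ) - 1 := by
        intro hv; exact hl (Fin.ext (by simp [hv]))
      rw [hAm, if_neg (by omega), mul_zero]
    · simp
  · rw [dif_neg h]
    apply Finset.sum_eq_zero
    intro l _
    rw [hAm, if_neg (by omega), mul_zero]

lemma gamma_val (n : ℕ) (hn : 0 < n) (s : ℂ) (hs : s ≠ 0)
    (Am : Matrix (Fin n) (Fin n) ℂ)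
    (hAm : ∀ l k : Fin n, Am l k = if (k : ℕ) = (l : ℕ) + 1 then 1 else 0)
    (Cm : Matrix (Fin 1) (Fin n) ℂ) (τc : ℂ)
    (hCm : ∀ l : Fin n, Cm 0 l = if (l : ℕ) = 0 then τc else 0)
    (κ' : ℂ) (Y : Matrix (Fin n) (Fin 1) ℂ)
    (hY : ∀ (k : Fin n) (l : Fin 1), Y k l = if (k : ℕ) = n - 1 then κ' else 0) :
    (Cm * (s • (1 : Matrix (Fin n) (Fin n) ℂ) - Am)⁻¹ * Y) 0 0 = τc * κ' * (s⁻¹) ^ n := by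
  set M := s • (1 : Matrix (Fin n) (Fin n) ℂ) - Am with hMdef
  have hM : ∀ k l : Fin n, M k l
      = s * (if k = l then 1 else 0) - (if (l : ℕ) = (k : ℕ) + 1 then 1 else 0) := by
    intro k l
    simp [hMdef, Matrix.sub_apply, Matrix.smul_apply, Matrix.one_apply, hAm, smul_eq_mul]
  have htri : M.BlockTriangular id := by
    intro j i hij
    have hlt : (i : ℕ) < (j : ℕ) := hij
    have h1 : ¬ (j = i) := by intro h; subst h; exact lt_irrefl _ hlt
    have h2 : ¬ ((i : ℕ) = (j : ℕ) + 1) := by omega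
    rw [hM, if_neg h1, if_neg h2]; ring
  have hdet : M.det = s ^ n := by
    rw [Matrix.det_of_upperTriangular htri]
    have : ∀ i : Fin n, M i i = s := by intro i; rw [hM]; simp
    simp [this]
  have hunit : IsUnit M.det := by rw [hdet]; exact isUnit_iff_ne_zero.mpr (pow_ne_zero _ hs)
  set U : Matrix (Fin n) (Fin 1) ℂ := fun k _ => κ' * (s⁻¹) ^ (n - (k : ℕ)) with hUdef
  have hpow : ∀ m : ℕ, s * (s⁻¹) ^ (m + 1) = (s⁻¹) ^ m := by
    intro m; rw [pow_succ]; field_simp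
  have hMU : M * U = Y := by
    ext k l0
    rw [Matrix.mul_apply, hY]
    have hsum : ∑ l, M k l * U l l0
        = s * (κ' * (s⁻¹) ^ (n - (k : ℕ)))
          - (if hk : (k : ℕ) + 1 < n then κ' * (s⁻¹) ^ (n - ((k : ℕ) + 1)) else 0) := by
      simp only [hM, sub_mul, Finset.sum_sub_distrib]
      congr 1
      · rw [Finset.sum_eq_single k]
        · simp [hUdef]
        · intro l _ hl; rw [if_neg (Ne.symm hl)]; ring
        · simp
      · by_cases hk : (k : ℕ) + 1 < n
        · rw [dif_pos hk, Finset.sum_eq_single ⟨(k : ℕ) + 1, hk⟩]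
          · simp [hUdef]
          · intro l _ hl
            have hne : ¬((l : ℕ) = (k : ℕ) + 1) :=
              fun hv => hl (Fin.ext (by simpa using hv))
            rw [if_neg hne, zero_mul]
          · simp
        · rw [dif_neg hk]
          apply Finset.sum_eq_zero
          intro l _
          rw [if_neg (by omega), zero_mul]
    rw [hsum]
    by_cases hk : (k : ℕ) + 1 < n
    · rw [dif_pos hk, if_neg (by omega)]
      have h2 : n - (k : ℕ) = (n - ((k : ℕ) + 1)) + 1 := by omega
      rw [h2]
      have h3 := hpow (n - ((k : ℕ) + 1))
      linear_combination κ' * h3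
    · have hk' : (k : ℕ) = n - 1 := by omega
      rw [dif_neg hk, if_pos hk']
      have h2 : n - (k : ℕ) = 1 := by omega
      rw [h2, pow_one]
      field_simp
      simp
  have hinv : M⁻¹ * Y = U := by
    rw [← hMU, ← Matrix.mul_assoc, Matrix.nonsing_inv_mul M hunit, Matrix.one_mul]
  rw [Matrix.mul_assoc, hinv, Matrix.mul_apply]
  rw [Finset.sum_eq_single ⟨0, hn⟩]
  · rw [hCm]; simp [hUdef]; ring
  · intro l _ hl
    have hne : ¬((l : ℕ) = 0) := fun hv => hl (Fin.ext (by simpa using hv))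
    rw [hCm, if_neg hne, zero_mul]
  · simp

/-- Corollary 3: in the SISO networked setup with `A` the upper shift
matrix, `B = eₙ`, `H = (0,…,0,κₙ)ᵀ` with `κₙ ≠ 0` and `C = (τ₁,0,…,0)` with `τ₁ ≠ 0`,
and with at least one node not under external control, the pair `(Φ, Ψ)` is controllable
provided that (a) every nonzero family `α₁,…,α_N` with `αᵢᵀA = 0` for all `i` and
`αᵢᵀB = 0` for all controlled `i` satisfies `Wᵀρᵀ ≠ 0`, and (b) for every nonzero
`s ∈ ℂ`, `[I_N − γ(s)·W, η(s)·Δ]` has rank `N`, where `γ(s) = C(sI−A)⁻¹H` and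
`η(s) = C(sI−A)⁻¹B`. -/
theorem stmt13 (N n : ℕ) (hN : 1 ≤ N) (hn : 0 < n)
    (A : Matrix (Fin n) (Fin n) ℝ)
    (hA : ∀ k l : Fin n, A k l = if (l : ℕ) = (k : ℕ) + 1 then 1 else 0)
    (B : Matrix (Fin n) (Fin 1) ℝ)
    (hB : ∀ (k : Fin n) (l : Fin 1), B k l = if (k : ℕ) = n - 1 then 1 else 0)
    -- H = (0,…,0,κₙ)ᵀ with κₙ ≠ 0
    (H : Matrix (Fin n) (Fin 1) ℝ) (κ : ℝ) (hκ : κ ≠ 0)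
    (hH : ∀ (k : Fin n) (l : Fin 1), H k l = if (k : ℕ) = n - 1 then κ else 0)
    -- C = (τ₁,0,…,0) with τ₁ ≠ 0
    (C : Matrix (Fin 1) (Fin n) ℝ) (τ : ℝ) (hτ : τ ≠ 0)
    (hC : ∀ (k : Fin 1) (l : Fin n), C k l = if (l : ℕ) = 0 then τ else 0)
    (W : Matrix (Fin N) (Fin N) ℝ)
    (δ : Fin N → ℝ) (hδ : ∀ i, δ i = 0 ∨ δ i = 1)
    -- |ν| < N : at least one node has no external control input
    (hν : (Finset.univ.filter (fun i : Fin N => δ i = 1)).card < N)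
    -- (a)
    (ha : ∀ α : Fin N → (Fin n → ℂ),
      (∀ i : Fin N, α i ᵥ* (A.map Complex.ofReal) = 0) →
      (∀ i : Fin N, δ i = 1 → α i ᵥ* (B.map Complex.ofReal) = 0) →
      (∃ i : Fin N, α i ≠ 0) →
      ∃ i : Fin N, ∑ j : Fin N, ((W j i : ℝ) : ℂ) • α j ≠ 0)
    -- (b)
    (hb : ∀ s : ℂ, s ≠ 0 →
      (Matrix.fromCols
        ((1 : Matrix (Fin N) (Fin N) ℂ)
          - ((C.map Complex.ofReal)
              * (s • (1 : Matrix (Fin n) (Fin n) ℂ) - A.map Complex.ofReal)⁻¹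
              * (H.map Complex.ofReal)) 0 0 • (W.map Complex.ofReal))
        (((C.map Complex.ofReal)
              * (s • (1 : Matrix (Fin n) (Fin n) ℂ) - A.map Complex.ofReal)⁻¹
              * (B.map Complex.ofReal)) 0 0
          • ((Matrix.diagonal δ).map Complex.ofReal))).rank = N) :
    IsControllable
      ((1 : Matrix (Fin N) (Fin N) ℂ) ⊗ₖ (A.map Complex.ofReal)
        + (W.map Complex.ofReal) ⊗ₖ ((H.map Complex.ofReal) * (C.map Complex.ofReal)))
      (((Matrix.diagonal δ).map Complex.ofReal) ⊗ₖ (B.map Complex.ofReal)) := by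
  intro s
  apply (fullRank_iff_leftKernel _).mpr
  intro x hx
  -- abbreviations
  set Am := A.map Complex.ofReal with hAmdef
  set Bm := B.map Complex.ofReal with hBmdef
  set Hm := H.map Complex.ofReal with hHmdef
  set Cm := C.map Complex.ofReal with hCmdef
  set Wm := W.map Complex.ofReal with hWmdef
  set Δm := (Matrix.diagonal δ).map Complex.ofReal with hΔmdef
  set ln : Fin n := ⟨n - 1, by omega⟩ with hlndef
  -- entry descriptions
  have hAm : ∀ l k : Fin n, Am l k = if (k : ℕ) = (l : ℕ) + 1 then 1 else 0 := by
    intro l k; rw [hAmdef, Matrix.map_apply, hA]; split <;> simp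
  have hCm : ∀ l : Fin n, Cm 0 l = if (l : ℕ) = 0 then (τ : ℂ) else 0 := by
    intro l; rw [hCmdef, Matrix.map_apply, hC]; split <;> simp
  have hHm : ∀ (k : Fin n) (l : Fin 1), Hm k l = if (k : ℕ) = n - 1 then (κ : ℂ) else 0 := by
    intro k l; rw [hHmdef, Matrix.map_apply, hH]; split <;> simp
  have hBm : ∀ (k : Fin n) (l : Fin 1), Bm k l = if (k : ℕ) = n - 1 then (1 : ℂ) else 0 := by
    intro k l; rw [hBmdef, Matrix.map_apply, hB]; split <;> simp
  have hBm' : ∀ (k : Fin n) (l : Fin 1), Bm k l = if k = ln then (1 : ℂ) else 0 := by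
    intro k l; rw [hBm]; congr 1
    simp [hlndef, Fin.ext_iff]
  have hΔm : ∀ j i : Fin N, Δm j i = if j = i then ((δ j : ℝ) : ℂ) else 0 := by
    intro j i; rw [hΔmdef, Matrix.map_apply, Matrix.diagonal_apply]; split <;> simp
  have hHCm : ∀ l k : Fin n, (Hm * Cm) l k
      = (if l = ln then ((κ : ℝ) : ℂ) else 0) * (if (k : ℕ) = 0 then ((τ : ℝ) : ℂ) else 0) := by
    intro l k
    rw [Matrix.mul_apply]
    rw [show (Finset.univ : Finset (Fin 1)) = {0} from rfl, Finset.sum_singleton, hHm, hCm]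
    congr 1
    simp [hlndef, Fin.ext_iff]
  -- split the kernel equation
  rw [Matrix.vecMul_fromCols] at hx
  have hx1 : x ᵥ* (s • (1 : Matrix (Fin N × Fin n) (Fin N × Fin n) ℂ)
      - ((1 : Matrix (Fin N) (Fin N) ℂ) ⊗ₖ Am + Wm ⊗ₖ (Hm * Cm))) = 0 := by
    funext cc; exact congrFun hx (Sum.inl cc)
  have hx2 : x ᵥ* (Δm ⊗ₖ Bm) = 0 := by
    funext cc; exact congrFun hx (Sum.inr cc)
  have E := entry_eq N n hn s (τ : ℂ) (κ : ℂ) Am (Hm * Cm) ln hAm hHCm Wm x hx1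
  set c : Fin N → ℂ := fun i => ∑ j, Wm j i * x (j, ln) with hcdef
  have E' : ∀ (i : Fin N) (k : Fin n), s * x (i, k)
      = (if h : 0 < (k : ℕ) then x (i, ⟨(k : ℕ) - 1, by omega⟩) else 0)
        + (if (k : ℕ) = 0 then (τ : ℂ) * (κ : ℂ) * c i else 0) := by
    intro i k
    rw [E i k, shift_sum n Am hAm]
  have E'' : ∀ (i : Fin N) (m : ℕ) (hm : m < n), s * x (i, ⟨m, hm⟩)
      = (if h : 0 < m then x (i, ⟨m - 1, by omega⟩) else 0)
        + (if m = 0 then (τ : ℂ) * (κ : ℂ) * c i else 0) := by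
    intro i m hm; exact E' i ⟨m, hm⟩
  have E2 : ∀ i : Fin N, ((δ i : ℝ) : ℂ) * x (i, ln) = 0 :=
    psi_eq N n Δm Bm ln (fun i => ((δ i : ℝ) : ℂ)) hΔm hBm' x hx2
  have hτκ : (τ : ℂ) * (κ : ℂ) ≠ 0 := by
    simp [hτ, hκ]
  rcases eq_or_ne s 0 with rfl | hs
  · -- case s = 0
    have hsmall : ∀ (i : Fin N) (m : ℕ) (hm : m < n - 1), x (i, ⟨m, by omega⟩) = 0 := by
      intro i m hm
      have h := E'' i (m + 1) (by omega)
      rw [zero_mul, dif_pos (Nat.succ_pos m), if_neg (Nat.succ_ne_zero m), add_zero] at h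
      simp only [Nat.add_sub_cancel] at h
      exact h.symm
    have hc0 : ∀ i, c i = 0 := by
      intro i
      have h := E'' i 0 hn
      rw [zero_mul, dif_neg (lt_irrefl 0), if_pos rfl, zero_add] at h
      exact (mul_eq_zero.mp h.symm).resolve_left hτκ
    by_contra hx0
    obtain ⟨p, hp⟩ := Function.ne_iff.mp hx0
    obtain ⟨i0, hi0⟩ := ha (fun i k => x (i, k))
      (by
        intro i; funext k
        show ∑ l, x (i, l) * Am l k = 0
        rw [shift_sum n Am hAm]
        by_cases h : 0 < (k : ℕ)
        · rw [dif_pos h]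
          exact hsmall i ((k : ℕ) - 1) (by omega)
        · rw [dif_neg h])
      (by
        intro i hδi; funext l0
        show ∑ l, x (i, l) * Bm l l0 = 0
        rw [Finset.sum_eq_single ln]
        · rw [hBm', if_pos rfl, mul_one]
          have := E2 i
          rw [hδi] at this; simpa using this
        · intro l _ hl; rw [hBm', if_neg hl, mul_zero]
        · simp)
      (by
        refine ⟨p.1, fun hz => hp ?_⟩
        have := congrFun hz p.2
        simpa using this)
    apply hi0
    funext k
    rw [Finset.sum_apply]
    simp only [Pi.smul_apply, smul_eq_mul]
    by_cases hk : (k : ℕ) = n - 1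
    · have hkl : k = ln := by simp [hlndef, Fin.ext_iff, hk]
      rw [hkl]
      have := hc0 i0
      rw [hcdef] at this
      simpa [hWmdef, Matrix.map_apply] using this
    · have hk' : (k : ℕ) < n - 1 := by omega
      apply Finset.sum_eq_zero
      intro j _
      have := hsmall j (k : ℕ) hk'
      simp only [Fin.eta] at this
      rw [this, mul_zero]
  · -- case s ≠ 0
    have hrec : ∀ (i : Fin N) (m : ℕ) (hm : m < n),
        x (i, ⟨m, hm⟩) = (τ : ℂ) * (κ : ℂ) * c i * (s⁻¹) ^ (m + 1) := by
      intro i m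
      induction m with
      | zero =>
        intro hm
        have h := E'' i 0 hm
        rw [dif_neg (lt_irrefl 0), if_pos rfl, zero_add] at h
        have h2 : s * ((τ : ℂ) * (κ : ℂ) * c i * (s⁻¹) ^ (0 + 1))
            = (τ : ℂ) * (κ : ℂ) * c i := by
          rw [pow_one]; field_simp
        exact mul_left_cancel₀ hs (h.trans h2.symm)
      | succ m ih =>
        intro hm
        have h := E'' i (m + 1) hm
        rw [dif_pos (Nat.succ_pos m), if_neg (Nat.succ_ne_zero m), add_zero] at h
        simp only [Nat.add_sub_cancel] at h
        rw [ih (by omega)] at h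
        have h2 : s * ((τ : ℂ) * (κ : ℂ) * c i * (s⁻¹) ^ (m + 1 + 1))
            = (τ : ℂ) * (κ : ℂ) * c i * (s⁻¹) ^ (m + 1) := by
          rw [pow_succ]; field_simp
        exact mul_left_cancel₀ hs (h.trans h2.symm)
    set a : Fin N → ℂ := fun i => x (i, ln) with hadef
    have haval : ∀ i, a i = (τ : ℂ) * (κ : ℂ) * c i * (s⁻¹) ^ n := by
      intro i
      have h := hrec i (n - 1) (by omega)
      rw [show n - 1 + 1 = n by omega] at h
      exact h
    have hγ := gamma_val n hn s hs Am hAm Cm (τ : ℂ) hCm (κ : ℂ) Hm hHm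
    have hη := gamma_val n hn s hs Am hAm Cm (τ : ℂ) hCm (1 : ℂ) Bm hBm
    have hb' := hb s hs
    rw [hγ, hη] at hb'
    have ha0 : a = 0 := by
      apply (fullRank_iff_leftKernel _).mp (hb'.trans (Fintype.card_fin N).symm) a
      rw [Matrix.vecMul_fromCols]
      funext cc
      rcases cc with cc | cc
      · simp only [Sum.elim_inl, Pi.zero_apply]
        show ∑ j, a j * ((1 : Matrix (Fin N) (Fin N) ℂ)
          - ((τ : ℂ) * (κ : ℂ) * (s⁻¹) ^ n) • Wm) j cc = 0
        have hsplit : ∀ j, a j * ((1 : Matrix (Fin N) (Fin N) ℂ)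
            - ((τ : ℂ) * (κ : ℂ) * (s⁻¹) ^ n) • Wm) j cc
            = (if j = cc then a cc else 0)
              - ((τ : ℂ) * (κ : ℂ) * (s⁻¹) ^ n) * (Wm j cc * a j) := by
          intro j
          rw [Matrix.sub_apply, Matrix.smul_apply, Matrix.one_apply, smul_eq_mul]
          split <;> rename_i hj
          · subst hj; ring
          · ring
        rw [Finset.sum_congr rfl fun j _ => hsplit j, Finset.sum_sub_distrib]
        rw [Finset.sum_ite_eq' Finset.univ cc (fun _ => a cc)]
        rw [if_pos (Finset.mem_univ cc), ← Finset.mul_sum]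
        have : ∑ j, Wm j cc * a j = c cc := by rw [hcdef]
        rw [this, haval cc]; ring
      · simp only [Sum.elim_inr, Pi.zero_apply]
        show ∑ j, a j * (((τ : ℂ) * 1 * (s⁻¹) ^ n) • Δm) j cc = 0
        have hsplit : ∀ j, a j * (((τ : ℂ) * 1 * (s⁻¹) ^ n) • Δm) j cc
            = ((τ : ℂ) * (s⁻¹) ^ n) * (if j = cc then ((δ j : ℝ) : ℂ) * a j else 0) := by
          intro j
          rw [Matrix.smul_apply, smul_eq_mul, hΔm]
          split <;> ring
        rw [Finset.sum_congr rfl fun j _ => hsplit j, ← Finset.mul_sum]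
        rw [Finset.sum_ite_eq' Finset.univ cc (fun j => ((δ j : ℝ) : ℂ) * a j)]
        rw [if_pos (Finset.mem_univ cc)]
        have := E2 cc
        rw [hadef]
        simp only [] at this ⊢
        rw [this, mul_zero]
    have hc0 : ∀ i, c i = 0 := by
      intro i
      rw [hcdef]
      apply Finset.sum_eq_zero
      intro j _
      have : a j = 0 := by rw [ha0]; rfl
      rw [hadef] at this
      simp only [] at this
      rw [this, mul_zero]
    funext p
    obtain ⟨i, k⟩ := p
    show x (i, k) = 0
    have h := hrec i (k : ℕ) k.isLt
    simp only [Fin.eta] at h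
    rw [h, hc0 i]
    ring
end
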